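/- Let β ∈ (0,∞), (α_k)_{k≥0} ⊆ ℂ, and let (x_k)_{k≥0} ⊆ ℂ satisfy for all k ∈ ℕ₀ that x_k = α_k + Σ_{l=0}^{k−1} β^{k−l} (x_l + 1_ℕ(l)·x_{max{l−1,0}}). Then for all k ∈ ℕ₀ it holds that x_k = Σ_{l=0}^{k} [α_l − 1_ℕ(l)·β·α_{max{l−1,0}}] · ((β + √(β²+β))^{k+1−l} − (β − √(β²+β))^{k+1−l}) / (2√(β²+β)). -/

import Mathlib

open Finset

/-- Closed-form solution of the full-history recursion with geometric weights (γ = 0 case). -/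
theorem full_history_recursion_closed_form_geometric (β : ℝ) (hβ : 0 < β) (α x : ℕ → ℂ)
    (hx : ∀ k : ℕ, x k = α k + ∑ l ∈ range k,
      (β : ℂ) ^ (k - l) * (x l + (if 1 ≤ l then x (l - 1) else 0))) :
    ∀ k : ℕ, x k = ∑ l ∈ range (k + 1),
      (α l - (if 1 ≤ l then (β : ℂ) * α (l - 1) else 0)) *
        (((β + Real.sqrt (β ^ 2 + β) : ℝ) : ℂ) ^ (k + 1 - l)
          - ((β - Real.sqrt (β ^ 2 + β) : ℝ) : ℂ) ^ (k + 1 - l)) /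
        (2 * (Real.sqrt (β ^ 2 + β) : ℂ)) := by
  set s : ℝ := Real.sqrt (β ^ 2 + β) with hs_def
  have hs0 : 0 < s := Real.sqrt_pos.mpr (by positivity)
  have hs2 : s ^ 2 = β ^ 2 + β := Real.sq_sqrt (by positivity)
  have hs2C : (s : ℂ) ^ 2 = (β : ℂ) ^ 2 + β := by exact_mod_cast congrArg (Complex.ofReal) hs2
  have hsC : (s : ℂ) ≠ 0 := by exact_mod_cast hs0.ne'
  obtain ⟨φ, hφ⟩ : ∃ φ : ℕ → ℂ, ∀ n,
      φ n = (((β + s : ℝ) : ℂ) ^ n - ((β - s : ℝ) : ℂ) ^ n) / (2 * (s : ℂ)) :=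
    ⟨_, fun n => rfl⟩
  have hφ0 : φ 0 = 0 := by simp [hφ]
  have hφ1 : φ 1 = 1 := by
    simp only [hφ, pow_one]
    push_cast
    field_simp
    ring
  have hφrec : ∀ n, φ (n + 2) = 2 * β * φ (n + 1) + β * φ n := by
    intro n
    have h1 : ((β + s : ℝ) : ℂ) ^ 2 = 2 * β * ((β + s : ℝ) : ℂ) + β := by
      push_cast; linear_combination hs2C
    have h2 : ((β - s : ℝ) : ℂ) ^ 2 = 2 * β * ((β - s : ℝ) : ℂ) + β := by
      push_cast; linear_combination hs2C
    simp only [hφ]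
    rw [mul_div_assoc', mul_div_assoc', ← add_div]
    congr 1
    linear_combination ((β + s : ℝ) : ℂ) ^ n * h1 - ((β - s : ℝ) : ℂ) ^ n * h2
  -- two-step recursion for x
  have hx2 : ∀ k, x (k + 1) = (α (k + 1) - β * α k) + 2 * β * x k
      + (if 1 ≤ k then (β : ℂ) * x (k - 1) else 0) := by
    intro k
    have h1 := hx (k + 1)
    rw [Finset.sum_range_succ] at h1
    have h2 : ∑ l ∈ range k, (β : ℂ) ^ (k + 1 - l) * (x l + (if 1 ≤ l then x (l - 1) else 0))
        = β * ∑ l ∈ range k, (β : ℂ) ^ (k - l) * (x l + (if 1 ≤ l then x (l - 1) else 0)) := by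
      rw [Finset.mul_sum]
      refine Finset.sum_congr rfl fun l hl => ?_
      have hl' : l < k := Finset.mem_range.mp hl
      have : k + 1 - l = (k - l) + 1 := by omega
      rw [this, pow_succ]
      ring
    have h3 : ∑ l ∈ range k, (β : ℂ) ^ (k - l) * (x l + (if 1 ≤ l then x (l - 1) else 0))
        = x k - α k := by
      rw [hx k]; ring
    rw [h2, h3] at h1
    rw [h1]
    have e : k + 1 - k = 1 := by omega
    rw [e, pow_one]
    split <;> ring
  -- main claim with φ
  obtain ⟨y, hy⟩ : ∃ y : ℕ → ℂ, ∀ l,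
      y l = α l - (if 1 ≤ l then (β : ℂ) * α (l - 1) else 0) := ⟨_, fun l => rfl⟩
  have main : ∀ k, x k = ∑ l ∈ range (k + 1), y l * φ (k + 1 - l) := by
    have step : ∀ k, (x k = ∑ l ∈ range (k + 1), y l * φ (k + 1 - l)) ∧
        (x (k + 1) = ∑ l ∈ range (k + 2), y l * φ (k + 2 - l)) := by
      intro k
      induction k with
      | zero =>
        constructor
        · have h0 := hx 0
          simp at h0
          simp [h0, hy, hφ1]
        · have h1 := hx2 0
          simp at h1
          rw [h1]
          rw [Finset.sum_range_succ, Finset.sum_range_succ, Finset.sum_range_zero]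
          have hφ2 : φ 2 = 2 * β := by
            have := hφrec 0
            rw [hφ0, hφ1] at this
            simpa using this
          simp [hy, hφ1, hφ2]
          have h00 := hx 0
          simp at h00
          rw [h00]; ring
      | succ k ih =>
        refine ⟨ih.2, ?_⟩
        have hrec := hx2 (k + 1)
        simp only [Nat.le_add_left, if_pos, Nat.add_sub_cancel] at hrec
        rw [hrec, ih.1, ih.2]
        -- extend the shorter sum
        have hext : ∑ l ∈ range (k + 1), y l * φ (k + 1 - l)
            = ∑ l ∈ range (k + 2), y l * φ (k + 1 - l) := by
          rw [Finset.sum_range_succ (fun l => y l * φ (k + 1 - l)) (k + 1)]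
          simp [hφ0]
        rw [hext]
        rw [Finset.sum_range_succ (fun l => y l * φ (k + 3 - l)) (k + 2)]
        have hcomb : ∑ l ∈ range (k + 2), y l * φ (k + 3 - l)
            = 2 * β * ∑ l ∈ range (k + 2), y l * φ (k + 2 - l)
              + β * ∑ l ∈ range (k + 2), y l * φ (k + 1 - l) := by
          rw [Finset.mul_sum, Finset.mul_sum, ← Finset.sum_add_distrib]
          refine Finset.sum_congr rfl fun l hl => ?_
          have hl' : l < k + 2 := Finset.mem_range.mp hl
          have e1 : k + 3 - l = (k + 1 - l) + 2 := by omega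
          have e2 : k + 2 - l = (k + 1 - l) + 1 := by omega
          rw [e1, e2, hφrec]
          ring
        rw [hcomb]
        have e : k + 3 - (k + 2) = 1 := by omega
        rw [e, hφ1, hy (k + 2), if_pos (by omega : 1 ≤ k + 2)]
        have e2 : k + 2 - 1 = k + 1 := by omega
        rw [e2]
        ring
    exact fun k => (step k).1
  intro k
  rw [main k]
  refine Finset.sum_congr rfl fun l hl => ?_
  rw [hy, hφ, mul_div_assoc]
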